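/- Suppose (u_i)_{i≥0} and (w_i)_{i≥0} are elements of k' satisfying: u₀ ≠ 0; π·u₀^{q³} + u₀^{q⁵} = 0; u_i = π·w_i^{q³} + w_i^{q⁵} for all i ≥ 0; and w_{i−1} = π·u_i^{q³} + u_i^{q⁵} for all i ≥ 1. Then for all i ≥ 0 one has v(u_i) = 1/(q^{10i}(q⁵−q³)) and v(w_i) = 1/(q^{10i+5}(q⁵−q³)). -/

import Mathlib

set_option synthInstance.maxHeartbeats 1000000 in
/-- The valuation computation for the recursions of Section 3.3 for the entries
`uᵢ = h³⁴ᵢ`, `wᵢ = h³⁵ᵢ` of the inverse matrix `g⁻¹` (with `w₋₁ = 0`):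
`v(uᵢ) = 1/(q^{10i}(q⁵−q³))` and `v(wᵢ) = 1/(q^{10i+5}(q⁵−q³))`. -/
theorem statement9 (p r q : ℕ) [Fact p.Prime] (hr : 0 < r) (hq : q = p ^ r)
    (k : Type*) [Field k] [Algebra (GaloisField p r) k] [IsAlgClosure (GaloisField p r) k]
    (k' : Type*) [Field k'] [Algebra (LaurentSeries k) k'] [IsAlgClosure (LaurentSeries k) k']
    (π : k') (hπ : π = algebraMap (LaurentSeries k) k' (HahnSeries.single (1 : ℤ) 1))
    (v : k' → WithTop ℚ)
    (hv0 : ∀ s : k', v s = ⊤ ↔ s = 0)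
    (hvmul : ∀ s x : k', v (s * x) = v s + v x)
    (hvadd : ∀ s x : k', min (v s) (v x) ≤ v (s + x))
    (hvπ : v π = 1)
    (u w : ℕ → k')
    (hu0 : u 0 ≠ 0)
    (huu : π * u 0 ^ q ^ 3 + u 0 ^ q ^ 5 = 0)
    (hur : ∀ i : ℕ, u i = π * w i ^ q ^ 3 + w i ^ q ^ 5)
    (hwr : ∀ i : ℕ, w i = π * u (i + 1) ^ q ^ 3 + u (i + 1) ^ q ^ 5) :
    ∀ i : ℕ,
      v (u i) = ((1 / ((q : ℚ) ^ (10 * i) * ((q : ℚ) ^ 5 - (q : ℚ) ^ 3)) : ℚ) : WithTop ℚ) ∧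
      v (w i) = ((1 / ((q : ℚ) ^ (10 * i + 5) * ((q : ℚ) ^ 5 - (q : ℚ) ^ 3)) : ℚ) : WithTop ℚ) := by
  have hp2 := (Fact.out (p := p.Prime)).two_le
  have hq2 : 2 ≤ q := by
    subst hq
    calc 2 ≤ p := hp2
    _ ≤ p ^ r := Nat.le_self_pow hr.ne' p
  have hqQ : (2:ℚ) ≤ (q:ℚ) := by exact_mod_cast hq2
  have hq0 : (0:ℚ) < (q:ℚ) := by linarith
  have hqne : (q:ℚ) ≠ 0 := ne_of_gt hq0
  set D : ℚ := (q:ℚ)^5 - (q:ℚ)^3 with hDdef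
  have hD1 : 1 < D := by
    have h35 : (q:ℚ)^3 * ((q:ℚ)^2 - 1) = D := by rw [hDdef]; ring
    nlinarith [pow_pos hq0 3, sq_nonneg ((q:ℚ) - 2)]
  have hD0 : 0 < D := by linarith
  have hDne : D ≠ 0 := ne_of_gt hD0
  -- basic valuation facts
  have vfin : ∀ x : k', x ≠ 0 → ∃ c : ℚ, v x = (c : WithTop ℚ) := by
    intro x hx
    have hne : v x ≠ ⊤ := fun h => hx ((hv0 x).mp h)
    obtain ⟨c, hc⟩ := WithTop.ne_top_iff_exists.mp hne
    exact ⟨c, hc.symm⟩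
  have hone : v 1 = ((0:ℚ) : WithTop ℚ) := by
    obtain ⟨c, hc⟩ := vfin 1 one_ne_zero
    have h := hvmul 1 1
    rw [mul_one, hc] at h
    have hcc : c = c + c := by exact_mod_cast h
    have : c = 0 := by linarith
    rw [hc, this]
  have hm1 : v (-1) = ((0:ℚ) : WithTop ℚ) := by
    obtain ⟨c, hc⟩ := vfin (-1) (by norm_num)
    have h := hvmul (-1) (-1)
    rw [neg_mul_neg, one_mul, hone, hc] at h
    have hcc : (0:ℚ) = c + c := by exact_mod_cast h
    have : c = 0 := by linarith
    rw [hc, this]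
  have vneg : ∀ x : k', v (-x) = v x := by
    intro x
    have h := hvmul (-1) x
    rw [neg_one_mul, hm1] at h
    simpa using h
  have vpow : ∀ (x : k') (c : ℚ), v x = (c : WithTop ℚ) →
      ∀ n : ℕ, v (x ^ n) = (((n : ℚ) * c : ℚ) : WithTop ℚ) := by
    intro x c hc n
    induction n with
    | zero => simpa using hone
    | succ n ih =>
      have hcast : ((n:ℚ) * c) + c = (((n+1:ℕ) : ℚ)) * c := by push_cast; ring
      rw [pow_succ, hvmul, ih, hc, ← WithTop.coe_add, hcast]
  have vadd_eq : ∀ x y : k', v x < v y → v (x + y) = v x := by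
    intro x y hxy
    have h1 : v x ≤ v (x + y) := by
      have := hvadd x y
      rwa [min_eq_left hxy.le] at this
    have h2 : v (x + y) ≤ v x := by
      have h := hvadd (x + y) (-y)
      rw [add_neg_cancel_right, vneg] at h
      by_contra hlt
      push_neg at hlt
      have : v x < min (v (x+y)) (v y) := lt_min hlt hxy
      exact absurd h (not_le.mpr this)
    exact le_antisymm h2 h1
  -- the key step lemma
  have hstep : ∀ (x : k') (a : ℚ), 0 < a → a < 1 →
      v (π * x ^ q ^ 3 + x ^ q ^ 5) = (a : WithTop ℚ) →
      v x = ((a / (q:ℚ) ^ 5 : ℚ) : WithTop ℚ) := by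
    intro x a ha0 ha1 hva
    have hx : x ≠ 0 := by
      rintro rfl
      rw [zero_pow (by positivity : q ^ 3 ≠ 0), zero_pow (by positivity : q ^ 5 ≠ 0),
        mul_zero, add_zero] at hva
      rw [(hv0 0).mpr rfl] at hva
      exact (WithTop.coe_ne_top (a := a)) hva.symm
    obtain ⟨b, hb⟩ := vfin x hx
    have h3 : v (x ^ q ^ 3) = (((q:ℚ)^3 * b : ℚ) : WithTop ℚ) := by
      rw [vpow x b hb (q ^ 3)]
      all_goals (congr 1 <;> (push_cast; try ring))
    have h5 : v (x ^ q ^ 5) = (((q:ℚ)^5 * b : ℚ) : WithTop ℚ) := by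
      rw [vpow x b hb (q ^ 5)]
      all_goals (congr 1 <;> (push_cast; try ring))
    have hπ3 : v (π * x ^ q ^ 3) = ((1 + (q:ℚ)^3 * b : ℚ) : WithTop ℚ) := by
      rw [hvmul, hvπ, h3]
      norm_cast
    rcases lt_trichotomy ((q:ℚ)^5 * b) (1 + (q:ℚ)^3 * b) with hlt | heq | hgt
    · -- the main case
      have hvv : v (x ^ q ^ 5) < v (π * x ^ q ^ 3) := by
        rw [h5, hπ3]; exact_mod_cast hlt
      have h := vadd_eq _ _ hvv
      rw [add_comm] at hva
      rw [hva, h5] at h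
      have hba : (q:ℚ)^5 * b = a := by exact_mod_cast h.symm
      have : b = a / (q:ℚ)^5 := by field_simp; linarith
      rw [hb, this]
    · exfalso
      have hm := hvadd (π * x ^ q ^ 3) (x ^ q ^ 5)
      rw [hπ3, h5, hva, ← WithTop.coe_min, WithTop.coe_le_coe] at hm
      rw [min_eq_right heq.le] at hm
      have hle : (q:ℚ)^5 * b ≤ a := hm
      have ht : (q:ℚ)^3 * b < 0 := by linarith
      have hb0 : b < 0 := by
        by_contra h; push_neg at h
        have : 0 ≤ (q:ℚ)^3 * b := mul_nonneg (by positivity) h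
        linarith
      have h53 : (q:ℚ)^5 * b ≤ (q:ℚ)^3 * b := by
        have h35 : (q:ℚ)^3 ≤ (q:ℚ)^5 := pow_le_pow_right₀ (by linarith) (by norm_num)
        nlinarith
      linarith
    · exfalso
      have hvv : v (π * x ^ q ^ 3) < v (x ^ q ^ 5) := by
        rw [h5, hπ3]; exact_mod_cast hgt
      have h := vadd_eq _ _ hvv
      rw [hva, hπ3] at h
      have hba : 1 + (q:ℚ)^3 * b = a := by exact_mod_cast h.symm
      have ht : (q:ℚ)^3 * b < 0 := by linarith
      have hb0 : b < 0 := by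
        by_contra h'; push_neg at h'
        have : 0 ≤ (q:ℚ)^3 * b := mul_nonneg (by positivity) h'
        linarith
      have h53 : (q:ℚ)^5 * b ≤ (q:ℚ)^3 * b := by
        have h35 : (q:ℚ)^3 ≤ (q:ℚ)^5 := pow_le_pow_right₀ (by linarith) (by norm_num)
        nlinarith
      linarith
  -- base case
  have hbase : v (u 0) = ((1 / D : ℚ) : WithTop ℚ) := by
    obtain ⟨b, hb⟩ := vfin (u 0) hu0
    have heq : u 0 ^ q ^ 5 = -(π * u 0 ^ q ^ 3) := by linear_combination huu
    have h3 : v (u 0 ^ q ^ 3) = (((q:ℚ)^3 * b : ℚ) : WithTop ℚ) := by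
      rw [vpow (u 0) b hb (q ^ 3)]
      all_goals (congr 1 <;> (push_cast; try ring))
    have h5 : v (u 0 ^ q ^ 5) = (((q:ℚ)^5 * b : ℚ) : WithTop ℚ) := by
      rw [vpow (u 0) b hb (q ^ 5)]
      all_goals (congr 1 <;> (push_cast; try ring))
    have hvv : v (u 0 ^ q ^ 5) = v (π * u 0 ^ q ^ 3) := by rw [heq, vneg]
    rw [h5, hvmul, hvπ, h3] at hvv
    have hqb : (q:ℚ)^5 * b = 1 + (q:ℚ)^3 * b := by exact_mod_cast hvv
    have hbval : b = 1 / D := by rw [eq_div_iff hDne, hDdef]; linear_combination hqb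
    rw [hb, hbval]
  -- bounds on the values appearing
  have hbound : ∀ m : ℕ, 0 < 1 / ((q:ℚ)^m * D) ∧ 1 / ((q:ℚ)^m * D) < 1 := by
    intro m
    have h1 : (1:ℚ) ≤ (q:ℚ)^m := one_le_pow₀ (by linarith)
    constructor
    · positivity
    · rw [div_lt_one (by positivity)]
      nlinarith
  have hw_of_hu : ∀ i : ℕ, v (u i) = ((1 / ((q:ℚ)^(10*i) * D) : ℚ) : WithTop ℚ) →
      v (w i) = ((1 / ((q:ℚ)^(10*i+5) * D) : ℚ) : WithTop ℚ) := by
    intro i hui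
    obtain ⟨hpos, hlt⟩ := hbound (10*i)
    have h := hstep (w i) _ hpos hlt (by rw [← hur i]; exact hui)
    rw [h]
    congr 1
    rw [pow_add]
    field_simp
  have hu_succ : ∀ i : ℕ, v (w i) = ((1 / ((q:ℚ)^(10*i+5) * D) : ℚ) : WithTop ℚ) →
      v (u (i+1)) = ((1 / ((q:ℚ)^(10*(i+1)) * D) : ℚ) : WithTop ℚ) := by
    intro i hwi
    obtain ⟨hpos, hlt⟩ := hbound (10*i+5)
    have h := hstep (u (i+1)) _ hpos hlt (by rw [← hwr i]; exact hwi)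
    rw [h]
    congr 1
    have hexp : 10*(i+1) = (10*i+5) + 5 := by omega
    rw [hexp, pow_add]
    field_simp
    ring
  have hu_all : ∀ i : ℕ, v (u i) = ((1 / ((q:ℚ)^(10*i) * D) : ℚ) : WithTop ℚ) := by
    intro i
    induction i with
    | zero => simpa using hbase
    | succ n ih => exact hu_succ n (hw_of_hu n ih)
  intro i
  exact ⟨hu_all i, hw_of_hu i (hu_all i)⟩
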